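/- arXiv:1405.4275 — 2 statements merged into one kernel-verified Lean document; each statement's English description precedes it below -/
import Mathlib

section
/- Let P = conv{x_1, …, x_n} ⊆ ℝ^p be full-dimensional, let h be an extreme point of P with solid angle ω = ω(N_P(h)), let δ ∈ (0,1), and let g_1, …, g_m be i.i.d. standard Gaussian vectors in ℝ^p. If ω ≥ (1/(2m)) log(1/δ), then the probability that g_j ∉ N_P(h) ∪ (−N_P(h)) for every j = 1, …, m is at most δ; i.e., the noiseless algorithm finds every extreme point whose normal cone has solid angle at least (1/(2m)) log(1/δ) with probability at least 1 − δ. -/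
open MeasureTheory ProbabilityTheory Metric Set
open scoped Pointwise

/-- The standard Gaussian measure `N(0, I_p)` on `ℝ^p`. -/
noncomputable def stdGaussian (p : ℕ) : Measure (EuclideanSpace ℝ (Fin p)) :=
  (Measure.pi fun _ : Fin p => gaussianReal 0 1).map
    (MeasurableEquiv.toLp 2 (Fin p → ℝ))

/-- The solid angle of a cone `K ⊆ ℝ^p`: its standard Gaussian measure. -/
noncomputable def solidAngle {p : ℕ} (K : Set (EuclideanSpace ℝ (Fin p))) : ℝ :=
  (stdGaussian p K).toReal

/-- The normal cone of a convex set `C` at a point `x`. -/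
def normalCone {p : ℕ} (C : Set (EuclideanSpace ℝ (Fin p))) (x : EuclideanSpace ℝ (Fin p)) :
    Set (EuclideanSpace ℝ (Fin p)) :=
  {w | ∀ y ∈ C, (inner ℝ w (y - x) : ℝ) ≤ 0}

instance stdGaussian_isProb (p : ℕ) : IsProbabilityMeasure (stdGaussian p) :=
  Measure.isProbabilityMeasure_map (MeasurableEquiv.toLp 2 (Fin p → ℝ)).measurable.aemeasurable

lemma gauss_map_neg : (gaussianReal 0 1).map (fun x : ℝ => -x) = gaussianReal 0 1 := by
  have := gaussianReal_map_const_mul (μ := 0) (v := 1) (-1)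
  simpa [neg_mul, one_mul] using this

lemma pi_gauss_map_neg (p : ℕ) :
    (Measure.pi fun _ : Fin p => gaussianReal 0 1).map (fun f : Fin p → ℝ => -f)
      = Measure.pi fun _ : Fin p => gaussianReal 0 1 := by
  have hmeas : Measurable (fun f : Fin p → ℝ => -f) :=
    measurable_pi_lambda _ fun i => (measurable_pi_apply i).neg
  symm; apply Measure.pi_eq
  intro s hs
  rw [Measure.map_apply hmeas (MeasurableSet.univ_pi hs)]
  have hpre : (fun f : Fin p → ℝ => -f) ⁻¹' (Set.pi Set.univ s)
      = Set.pi Set.univ (fun i => (fun a : ℝ => -a) ⁻¹' s i) := by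
    ext f; simp [Set.mem_pi]
  rw [hpre, Measure.pi_pi]
  refine Finset.prod_congr rfl fun i _ => ?_
  rw [← Measure.map_apply (measurable_neg) (hs i), gauss_map_neg]

lemma isClosed_normalCone {p : ℕ} (C : Set (EuclideanSpace ℝ (Fin p)))
    (x : EuclideanSpace ℝ (Fin p)) : IsClosed (normalCone C x) := by
  have : normalCone C x = ⋂ y ∈ C, {w : EuclideanSpace ℝ (Fin p) | (inner ℝ w (y - x) : ℝ) ≤ 0} := by
    ext w; simp [normalCone]
  rw [this]
  exact isClosed_biInter fun y _ => isClosed_le (continuous_id.inner continuous_const) continuous_const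

lemma stdGaussian_map_neg (p : ℕ) :
    (stdGaussian p).map (fun x => -x) = stdGaussian p := by
  unfold _root_.stdGaussian
  have e := (MeasurableEquiv.toLp 2 (Fin p → ℝ))
  have hmeas : Measurable (fun f : Fin p → ℝ => -f) :=
    measurable_pi_lambda _ fun i => (measurable_pi_apply i).neg
  rw [Measure.map_map measurable_neg (MeasurableEquiv.toLp 2 (Fin p → ℝ)).measurable]
  have hcomp : (fun x => -x) ∘ ⇑(MeasurableEquiv.toLp 2 (Fin p → ℝ))
      = ⇑(MeasurableEquiv.toLp 2 (Fin p → ℝ)) ∘ (fun f : Fin p → ℝ => -f) := rfl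
  rw [hcomp, ← Measure.map_map (MeasurableEquiv.toLp 2 (Fin p → ℝ)).measurable hmeas,
    pi_gauss_map_neg]

lemma stdGaussian_neg_set {p : ℕ} {K : Set (EuclideanSpace ℝ (Fin p))} (hK : MeasurableSet K) :
    stdGaussian p (-K) = stdGaussian p K := by
  have hnegK : -K = (fun x : EuclideanSpace ℝ (Fin p) => -x) ⁻¹' K := by
    ext w; simp [Set.mem_neg]
  rw [hnegK, ← Measure.map_apply measurable_neg hK, stdGaussian_map_neg]

lemma stdGaussian_singleton_zero {p : ℕ} (hp : 0 < p) :
    stdGaussian p {(0 : EuclideanSpace ℝ (Fin p))} = 0 := by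
  unfold _root_.stdGaussian
  rw [Measure.map_apply (MeasurableEquiv.toLp 2 (Fin p → ℝ)).measurable
    (measurableSet_singleton 0)]
  have hsub : (MeasurableEquiv.toLp 2 (Fin p → ℝ)) ⁻¹' {(0 : EuclideanSpace ℝ (Fin p))}
      ⊆ Set.pi Set.univ (fun _ : Fin p => ({0} : Set ℝ)) := by
    intro f hf
    have : (MeasurableEquiv.toLp 2 (Fin p → ℝ)) f = 0 := hf
    have hf0 : f = 0 := by
      have := congrArg ((MeasurableEquiv.toLp 2 (Fin p → ℝ)).symm) this
      simpa using this
    intro i _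
    simp [hf0]
  refine le_antisymm (le_trans (measure_mono hsub) ?_) (zero_le)
  rw [Measure.pi_pi]
  have h0 : (gaussianReal 0 1) {(0:ℝ)} = 0 :=
    gaussianReal_absolutelyContinuous 0 one_ne_zero Real.volume_singleton
  rw [Finset.prod_eq_zero (Finset.mem_univ ⟨0, hp⟩) h0]

lemma normalCone_inter_neg {p : ℕ} {P : Set (EuclideanSpace ℝ (Fin p))}
    {h : EuclideanSpace ℝ (Fin p)} (hfull : (interior P).Nonempty) :
    normalCone P h ∩ -(normalCone P h) ⊆ {0} := by
  rintro w ⟨hw1, hw2⟩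
  have hw2' : -w ∈ normalCone P h := Set.mem_neg.mp hw2
  obtain ⟨c, hc⟩ := hfull
  obtain ⟨r, hr, hball⟩ := Metric.isOpen_iff.mp isOpen_interior c hc
  have hPc : ∀ v : EuclideanSpace ℝ (Fin p), ‖v‖ < r → c + v ∈ P := fun v hv =>
    interior_subset (hball (by simpa [dist_eq_norm] using hv))
  have hzero : ∀ y ∈ P, (inner ℝ w (y - h) : ℝ) = 0 := by
    intro y hy
    have h2 := hw2' y hy
    rw [inner_neg_left] at h2
    exact le_antisymm (hw1 y hy) (by linarith)
  by_contra hw0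
  have hwne : w ≠ 0 := fun hw => hw0 (by simp [hw])
  have hwpos : 0 < ‖w‖ := norm_pos_iff.mpr hwne
  set t : ℝ := r / (2 * ‖w‖) with ht
  have htpos : 0 < t := div_pos hr (by positivity)
  have hn : ‖t • w‖ < r := by
    rw [norm_smul, Real.norm_of_nonneg htpos.le, ht]
    rw [div_mul_eq_mul_div]
    rw [div_lt_iff₀ (by positivity)]
    nlinarith
  have h1 : (inner ℝ w ((c + t • w) - h) : ℝ) = 0 := hzero _ (hPc _ hn)
  have h2 : (inner ℝ w (c - h) : ℝ) = 0 := hzero c (interior_subset hc)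
  have hrw : (c + t • w) - h = (c - h) + t • w := by abel
  rw [hrw, inner_add_right, h2, zero_add, inner_smul_right, real_inner_self_eq_norm_sq] at h1
  have : (0:ℝ) < t * ‖w‖^2 := by positivity
  linarith

/-- Lemma (noiseless algorithm): if `ω ≥ (1/(2m)) log(1/δ)`, then the probability that all
`m` i.i.d. Gaussian vectors miss the extreme point `h` is at most `δ`; i.e. the noiseless
algorithm finds every extreme point of solid angle at least `(1/(2m)) log(1/δ)` with
probability at least `1 − δ`. -/
theorem noiseless_algorithm_finds_extreme_point
    (p n m : ℕ) (hm : 0 < m) (x : Fin n → EuclideanSpace ℝ (Fin p))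
    (P : Set (EuclideanSpace ℝ (Fin p))) (hP : P = convexHull ℝ (Set.range x))
    (hfull : (interior P).Nonempty)
    (h : EuclideanSpace ℝ (Fin p)) (hh : h ∈ Set.extremePoints ℝ P)
    (ω : ℝ) (hω : ω = solidAngle (normalCone P h))
    (δ : ℝ) (hδ : δ ∈ Set.Ioo (0 : ℝ) 1)
    (hωge : 1 / (2 * m) * Real.log (1 / δ) ≤ ω) :
    ((Measure.pi fun _ : Fin m => stdGaussian p)
      {g | ∀ j : Fin m, g j ∉ normalCone P h ∪ -normalCone P h}).toReal ≤ δ := by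
  set K := normalCone P h with hKdef
  have hKmeas : MeasurableSet K := (isClosed_normalCone P h).measurableSet
  have hnegK : -K = (fun x : EuclideanSpace ℝ (Fin p) => -x) ⁻¹' K := by
    ext w; simp [Set.mem_neg]
  have hnegmeas : MeasurableSet (-K) := hnegK ▸ hKmeas.preimage measurable_neg
  have hSmeas : MeasurableSet (K ∪ -K) := hKmeas.union hnegmeas
  have hset : {g : Fin m → EuclideanSpace ℝ (Fin p) | ∀ j, g j ∉ K ∪ -K}
      = Set.pi Set.univ (fun _ : Fin m => (K ∪ -K)ᶜ) := by
    ext g; simp [Set.mem_pi]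
  rw [hset, Measure.pi_pi, Finset.prod_const, Finset.card_univ, Fintype.card_fin,
    ENNReal.toReal_pow]
  rcases Nat.eq_zero_or_pos p with hp | hp
  · subst hp
    have h0K : (0 : EuclideanSpace ℝ (Fin 0)) ∈ K := by
      rw [hKdef]; intro y _; simp
    have hcompl0 : (K ∪ -K)ᶜ = ∅ := by
      ext w
      have hw0 : w = 0 := Subsingleton.elim w 0
      simp [hw0, h0K]
    rw [hcompl0, measure_empty]
    simp only [ENNReal.toReal_zero]
    rw [zero_pow hm.ne']
    exact hδ.1.le
  · have hinter : stdGaussian p (K ∩ -K) = 0 := by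
      refine le_antisymm (le_trans (measure_mono (normalCone_inter_neg hfull)) ?_) (zero_le)
      rw [stdGaussian_singleton_zero hp]
    have hu := measure_union_add_inter (μ := stdGaussian p) K hnegmeas
    rw [hinter, add_zero, stdGaussian_neg_set hKmeas] at hu
    have hSreal : (stdGaussian p (K ∪ -K)).toReal = 2 * ω := by
      rw [hu, ENNReal.toReal_add (measure_ne_top _ _) (measure_ne_top _ _), hω, solidAngle]
      ring
    have hle1 : stdGaussian p (K ∪ -K) ≤ 1 := prob_le_one
    have hcompl : stdGaussian p ((K ∪ -K)ᶜ) = 1 - stdGaussian p (K ∪ -K) := by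
      rw [measure_compl hSmeas (measure_ne_top _ _), measure_univ]
    have hq : (stdGaussian p ((K ∪ -K)ᶜ)).toReal = 1 - 2 * ω := by
      rw [hcompl, ENNReal.toReal_sub_of_le hle1 ENNReal.one_ne_top, ENNReal.toReal_one, hSreal]
    rw [hq]
    have hmpos : (0 : ℝ) < m := Nat.cast_pos.mpr hm
    have hlog : Real.log (1 / δ) ≤ 2 * m * ω := by
      rw [div_mul_eq_mul_div, div_le_iff₀ (by positivity)] at hωge
      linarith
    have hlogδ : Real.log (1 / δ) = -Real.log δ := by
      rw [one_div, Real.log_inv]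
    have hq0 : (0 : ℝ) ≤ 1 - 2 * ω := by
      rw [← hq]; exact ENNReal.toReal_nonneg
    have hqe : 1 - 2 * ω ≤ Real.exp (-(2 * ω)) := by
      have := Real.add_one_le_exp (-(2 * ω)); linarith
    calc (1 - 2 * ω) ^ m ≤ (Real.exp (-(2 * ω))) ^ m := pow_le_pow_left₀ hq0 hqe m
      _ = Real.exp (m * -(2 * ω)) := by rw [← Real.exp_nat_mul]
      _ ≤ Real.exp (Real.log δ) := by
          apply Real.exp_le_exp.mpr
          have : -Real.log δ ≤ 2 * m * ω := hlogδ ▸ hlog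
          nlinarith
      _ = δ := Real.exp_log hδ.1
end

section
/- Let P = conv{x_1, …, x_n} ⊆ ℝ^p be the convex hull of a nonempty finite set of points. Then the solid angles of the normal cones at the extreme points of P form a probability distribution: Σ_{h ∈ ext(P)} ω(N_P(h)) = 1, where the sum runs over the (finitely many) extreme points of P. -/
open MeasureTheory ProbabilityTheory Metric Set
open scoped Pointwise

/-- Absolute continuity for finite products of measures on `ℝ`. -/
lemma pi_absolutelyContinuous : ∀ (n : ℕ) (μ ν : Fin n → Measure ℝ),
    (∀ i, SigmaFinite (μ i)) → (∀ i, SigmaFinite (ν i)) → (∀ i, μ i ≪ ν i) →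
    Measure.pi μ ≪ Measure.pi ν := by
  intro n
  induction n with
  | zero =>
    intro μ ν _ _ _
    rw [Measure.pi_of_empty, Measure.pi_of_empty]
  | succ n ih =>
    intro μ ν hμ hν h
    haveI := hμ; haveI := hν
    have hμp := MeasureTheory.measurePreserving_piFinSuccAbove μ 0
    have hνp := MeasureTheory.measurePreserving_piFinSuccAbove ν 0
    rw [← (hμp.symm _).map_eq, ← (hνp.symm _).map_eq]
    haveI : ∀ j : Fin n, SigmaFinite (ν ((0 : Fin (n+1)).succAbove j)) := fun j => hν _
    refine Measure.AbsolutelyContinuous.map ?_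
      (MeasurableEquiv.piFinSuccAbove (fun _ => ℝ) 0).symm.measurable
    exact (h 0).prod (ih _ _ (fun j => hμ _) (fun j => hν _) (fun j => h _))

/-- The standard Gaussian on `ℝ^p` is absolutely continuous w.r.t. Lebesgue measure. -/
lemma stdGaussian_absolutelyContinuous (p : ℕ) :
    stdGaussian p ≪ (volume : Measure (EuclideanSpace ℝ (Fin p))) := by
  have h1 : Measure.pi (fun _ : Fin p => gaussianReal 0 1) ≪
      Measure.pi (fun _ : Fin p => (volume : Measure ℝ)) :=
    pi_absolutelyContinuous p _ _ (fun _ => inferInstance) (fun _ => inferInstance)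
      (fun _ => gaussianReal_absolutelyContinuous 0 one_ne_zero)
  have h2 := (EuclideanSpace.volume_preserving_symm_measurableEquiv_toLp (Fin p)).symm
  rw [_root_.stdGaussian, ← h2.map_eq]
  exact h1.map (MeasurableEquiv.toLp 2 (Fin p → ℝ)).measurable

instance stdGaussian_isProbabilityMeasure (p : ℕ) : IsProbabilityMeasure (stdGaussian p) := by
  unfold _root_.stdGaussian
  exact Measure.isProbabilityMeasure_map (MeasurableEquiv.measurable _).aemeasurable

/-- A hyperplane through the origin is null for the standard Gaussian. -/
lemma stdGaussian_hyperplane {p : ℕ} (v : EuclideanSpace ℝ (Fin p)) (hv : v ≠ 0) :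
    stdGaussian p {z | (inner ℝ z v : ℝ) = 0} = 0 := by
  apply stdGaussian_absolutelyContinuous p
  have hset : {z : EuclideanSpace ℝ (Fin p) | (inner ℝ z v : ℝ) = 0} =
      (LinearMap.ker ((innerSL ℝ v : EuclideanSpace ℝ (Fin p) →L[ℝ] ℝ) :
        EuclideanSpace ℝ (Fin p) →ₗ[ℝ] ℝ) : Set (EuclideanSpace ℝ (Fin p))) := by
    ext z
    simp only [Set.mem_setOf_eq, SetLike.mem_coe, LinearMap.mem_ker,
      ContinuousLinearMap.coe_coe, innerSL_apply_apply]
    rw [real_inner_comm]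
  rw [hset]
  apply Measure.addHaar_submodule
  intro htop
  have hvmem : v ∈ (⊤ : Submodule ℝ (EuclideanSpace ℝ (Fin p))) := Submodule.mem_top
  rw [← htop, LinearMap.mem_ker] at hvmem
  simp only [ContinuousLinearMap.coe_coe, innerSL_apply_apply] at hvmem
  exact hv (inner_self_eq_zero.mp hvmem)

open scoped Classical in
/-- The solid angles of the normal cones at the extreme points of a polytope
`P = conv{x₁, …, xₙ}` form a probability distribution: they sum to `1`. -/
theorem sum_solidAngle_normalCone_eq_one
    (p : ℕ) (s : Finset (EuclideanSpace ℝ (Fin p))) (hs : s.Nonempty)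
    (P : Set (EuclideanSpace ℝ (Fin p))) (hP : P = convexHull ℝ (s : Set (EuclideanSpace ℝ (Fin p)))) :
    ∑ h ∈ s.filter (fun h => h ∈ Set.extremePoints ℝ P), solidAngle (normalCone P h) = 1 := by
  subst hP
  set P := convexHull ℝ (s : Set (EuclideanSpace ℝ (Fin p))) with hP
  set T : Finset (EuclideanSpace ℝ (Fin p)) := s.filter (fun h => h ∈ Set.extremePoints ℝ P) with hT
  have hsP : (s : Set (EuclideanSpace ℝ (Fin p))) ⊆ P := subset_convexHull ℝ _
  have hPc : IsCompact P := s.finite_toSet.isCompact_convexHull ℝ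
  obtain ⟨x0, hx0⟩ := hs
  have hPne : P.Nonempty := ⟨x0, hsP hx0⟩
  -- Covering: every z lies in the normal cone of some extreme point of P belonging to s.
  have cover : ∀ z : EuclideanSpace ℝ (Fin p), ∃ h ∈ T, z ∈ normalCone P h := by
    intro z
    obtain ⟨y0, hy0, hmax⟩ := hPc.exists_isMaxOn hPne (innerSL ℝ z).continuous.continuousOn
    set F : Set (EuclideanSpace ℝ (Fin p)) := {x ∈ P | ∀ y ∈ P, innerSL ℝ z y ≤ innerSL ℝ z x} with hF
    have hFP : F ⊆ P := fun x hx => hx.1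
    have hFexp : IsExposed ℝ P F := fun _ => ⟨innerSL ℝ z, rfl⟩
    have hy0F : y0 ∈ F := ⟨hy0, fun y hy => hmax hy⟩
    have hFc : IsCompact F := hPc.of_isClosed_subset (hFexp.isClosed hPc.isClosed) hFP
    obtain ⟨e, heF⟩ := hFc.extremePoints_nonempty ⟨y0, hy0F⟩
    have heP : e ∈ Set.extremePoints ℝ P :=
      hFexp.isExtreme.extremePoints_subset_extremePoints heF
    have heS : e ∈ s := extremePoints_convexHull_subset heP
    refine ⟨e, Finset.mem_filter.mpr ⟨heS, heP⟩, ?_⟩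
    intro y hy
    have hle : (inner ℝ z y : ℝ) ≤ (inner ℝ z e : ℝ) := heF.1.2 y hy
    rw [inner_sub_right]
    linarith
  -- Pairwise a.e. disjointness of the normal cones.
  have hdisj : (↑T : Set (EuclideanSpace ℝ (Fin p))).Pairwise
      (Function.onFun (MeasureTheory.AEDisjoint (stdGaussian p)) fun h => normalCone P h) := by
    intro a ha b hb hab
    have haS : a ∈ s := (Finset.mem_filter.mp ha).1
    have hbS : b ∈ s := (Finset.mem_filter.mp hb).1
    have hsub : normalCone P a ∩ normalCone P b ⊆ {z : EuclideanSpace ℝ (Fin p) | (inner ℝ z (a - b) : ℝ) = 0} := by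
      rintro z ⟨hza, hzb⟩
      have h1 : (inner ℝ z (b - a) : ℝ) ≤ 0 := hza b (hsP hbS)
      have h2 : (inner ℝ z (a - b) : ℝ) ≤ 0 := hzb a (hsP haS)
      have h3 : (inner ℝ z (a - b) : ℝ) = -(inner ℝ z (b - a) : ℝ) := by
        rw [← inner_neg_right]; congr 1; abel
      simp only [Set.mem_setOf_eq]
      linarith
    exact measure_mono_null hsub (stdGaussian_hyperplane (a - b) (sub_ne_zero.mpr hab))
  -- Sum of measures equals measure of the union, which is everything.
  have hunion : (⋃ h ∈ T, normalCone P h) = Set.univ := by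
    apply Set.eq_univ_of_forall
    intro z
    obtain ⟨h, hh, hz⟩ := cover z
    exact Set.mem_biUnion hh hz
  have hmeas : ∀ h ∈ T, NullMeasurableSet (normalCone P h) (stdGaussian p) :=
    fun h _ => (isClosed_normalCone P h).measurableSet.nullMeasurableSet
  have key : ∑ h ∈ T, stdGaussian p (normalCone P h) = 1 := by
    rw [← measure_biUnion_finset₀ hdisj hmeas, hunion, measure_univ]
  have hfin : ∀ h ∈ T, stdGaussian p (normalCone P h) ≠ ⊤ := fun h _ => measure_ne_top _ _
  calc ∑ h ∈ T, solidAngle (normalCone P h)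
      = (∑ h ∈ T, stdGaussian p (normalCone P h)).toReal := (ENNReal.toReal_sum hfin).symm
    _ = 1 := by rw [key]; simp
end
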